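/- Hermite–Genocchi formula: for f ∈ C^n(ℝ) and real numbers a₀,...,aₙ (not necessarily distinct), the divided difference f[a₀,...,aₙ] equals the integral over the standard n-simplex Sₙ = {t ∈ ℝ₊ⁿ : ∑ tₖ ≤ 1} of f⁽ⁿ⁾(t₀a₀ + t₁a₁ + ... + tₙaₙ) dt₁...dtₙ, where t₀ = 1 − ∑_{k=1}^n tₖ. -/

import Mathlib

open MeasureTheory

/-- Divided difference at a (sorted) list of possibly repeated nodes: the usual
recursion, extended by the derivative formula when all nodes coincide
(for a monotone node list the first and last node agree iff all agree). -/
noncomputable def cDivDiff (f : ℝ → ℝ) : List ℝ → ℝ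
  | [] => 0
  | [x] => f x
  | x :: y :: rest =>
      if (y :: rest).getLast (by simp) = x then
        iteratedDeriv (rest.length + 1) f x / (rest.length + 1).factorial
      else
        (cDivDiff f (y :: rest) - cDivDiff f (x :: (y :: rest).dropLast)) /
          ((y :: rest).getLast (by simp) - x)
termination_by l => l.length
decreasing_by all_goals simp [List.length_dropLast]

/-- The standard `n`-simplex `Sₙ = {t ∈ ℝ₊ⁿ : ∑ₖ tₖ ≤ 1}`. -/
def stdSimplexSet (n : ℕ) : Set (Fin n → ℝ) :=
  {u | (∀ k, 0 ≤ u k) ∧ ∑ k, u k ≤ 1}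

namespace HGaux

noncomputable def bary {n : ℕ} (a : Fin (n + 1) → ℝ) (u : Fin n → ℝ) : ℝ :=
  (1 - ∑ k, u k) * a 0 + ∑ k, u k * a k.succ

lemma continuous_bary {n : ℕ} (a : Fin (n + 1) → ℝ) : Continuous (bary a) := by
  unfold bary; fun_prop

lemma isClosed_simplex (n : ℕ) : IsClosed (stdSimplexSet n) := by
  have h1 : IsClosed {u : Fin n → ℝ | ∀ k, 0 ≤ u k} := by
    have : {u : Fin n → ℝ | ∀ k, 0 ≤ u k} = ⋂ k, {u | 0 ≤ u k} := by
      ext u; simp [Set.mem_iInter]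
    rw [this]
    exact isClosed_iInter fun k => isClosed_le continuous_const (continuous_apply k)
  have h2 : IsClosed {u : Fin n → ℝ | ∑ k, u k ≤ 1} :=
    isClosed_le (by fun_prop) continuous_const
  exact h1.inter h2

lemma measurableSet_simplex (n : ℕ) : MeasurableSet (stdSimplexSet n) :=
  (isClosed_simplex n).measurableSet

lemma isCompact_simplex (n : ℕ) : IsCompact (stdSimplexSet n) := by
  refine IsCompact.of_isClosed_subset (isCompact_Icc (a := (0 : Fin n → ℝ)) (b := 1))
    (isClosed_simplex n) ?_
  rintro u ⟨h0, h1⟩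
  constructor
  · intro k; exact h0 k
  · intro k
    calc u k ≤ ∑ j, u j := Finset.single_le_sum (fun j _ => h0 j) (Finset.mem_univ k)
    _ ≤ 1 := h1

lemma integrableOn_simplex {n : ℕ} {g : (Fin n → ℝ) → ℝ} (hg : Continuous g) :
    IntegrableOn g (stdSimplexSet n) :=
  hg.continuousOn.integrableOn_compact (isCompact_simplex n)

lemma slice {n : ℕ} (i : Fin (n + 1)) (g : (Fin (n + 1) → ℝ) → ℝ) (hg : Continuous g) :
    ∫ u in stdSimplexSet (n + 1), g u
      = ∫ v in stdSimplexSet n, ∫ x in (0:ℝ)..(1 - ∑ k, v k), g (Fin.insertNth i x v) := by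
  classical
  set e := MeasurableEquiv.piFinSuccAbove (fun _ : Fin (n + 1) => ℝ) i with he
  have hmp : MeasurePreserving e.symm volume volume :=
    (volume_preserving_piFinSuccAbove (fun _ : Fin (n + 1) => ℝ) i).symm
  have hsymm : ∀ p : ℝ × (Fin n → ℝ), e.symm p = Fin.insertNth i p.1 p.2 := by
    intro p; rfl
  set B : Set (ℝ × (Fin n → ℝ)) := e.symm ⁻¹' stdSimplexSet (n + 1) with hBdef
  have hBmem : ∀ p : ℝ × (Fin n → ℝ),
      p ∈ B ↔ (∀ k, 0 ≤ p.2 k) ∧ 0 ≤ p.1 ∧ p.1 + ∑ k, p.2 k ≤ 1 := by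
    rintro ⟨x, v⟩
    simp only [hBdef, Set.mem_preimage, hsymm, stdSimplexSet, Set.mem_setOf_eq,
      Fin.forall_iff_succAbove i, Fin.insertNth_apply_same, Fin.insertNth_apply_succAbove,
      Fin.sum_univ_succAbove _ i]
    tauto
  have hBmeas : MeasurableSet B := e.symm.measurable (measurableSet_simplex _)
  have hBcompact : IsCompact B := by
    have himg : B = (⇑e) '' stdSimplexSet (n + 1) := by
      rw [hBdef, ← MeasurableEquiv.image_eq_preimage_symm]
    have hce : Continuous (⇑e) := by
      have : ⇑e = fun u : Fin (n + 1) → ℝ => (u i, fun j => u (i.succAbove j)) := rfl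
      rw [this]; fun_prop
    rw [himg]
    exact (isCompact_simplex (n + 1)).image hce
  have hcsymm : Continuous (⇑e.symm) := by
    have : ⇑e.symm = fun p : ℝ × (Fin n → ℝ) => (Fin.insertNth i p.1 p.2 : Fin (n+1) → ℝ) :=
      funext hsymm
    rw [this]
    apply continuous_pi; intro j
    refine Fin.succAboveCases i ?_ ?_ j
    · simp only [Fin.insertNth_apply_same]; exact continuous_fst
    · intro k
      simp only [Fin.insertNth_apply_succAbove]
      exact (continuous_apply k).comp continuous_snd
  have hInt : Integrable (B.indicator fun p => g (e.symm p)) (volume.prod volume) := by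
    rw [← Measure.volume_eq_prod, integrable_indicator_iff hBmeas]
    exact ((hg.comp hcsymm).continuousOn.integrableOn_compact hBcompact)
  calc ∫ u in stdSimplexSet (n + 1), g u
      = ∫ p in B, g (e.symm p) := by
        rw [hBdef, hmp.setIntegral_preimage_emb e.symm.measurableEmbedding]
    _ = ∫ p, B.indicator (fun p => g (e.symm p)) p := (integral_indicator hBmeas).symm
    _ = ∫ v, ∫ x, B.indicator (fun p => g (e.symm p)) (x, v) := by
        rw [Measure.volume_eq_prod]
        exact integral_prod_symm _ hInt
    _ = ∫ v, (stdSimplexSet n).indicator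
          (fun v => ∫ x in (0:ℝ)..(1 - ∑ k, v k), g (Fin.insertNth i x v)) v := by
        congr 1; funext v
        by_cases hv : v ∈ stdSimplexSet n
        · rw [Set.indicator_of_mem hv]
          obtain ⟨hv0, hv1⟩ := hv
          have hslice : (fun x => B.indicator (fun p => g (e.symm p)) (x, v))
              = (Set.Icc (0:ℝ) (1 - ∑ k, v k)).indicator
                  (fun x => g (Fin.insertNth i x v)) := by
            funext x
            by_cases hx : (x, v) ∈ B
            · rw [Set.indicator_of_mem hx, Set.indicator_of_mem, hsymm]
              rcases (hBmem (x, v)).1 hx with ⟨_, h1, h2⟩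
              exact ⟨h1, by linarith⟩
            · rw [Set.indicator_of_notMem hx, Set.indicator_of_notMem]
              intro hxmem
              exact hx ((hBmem (x, v)).2 ⟨hv0, hxmem.1, by have := hxmem.2; linarith⟩)
          rw [hslice, integral_indicator measurableSet_Icc,
            integral_Icc_eq_integral_Ioc,
            ← intervalIntegral.integral_of_le (by linarith : (0:ℝ) ≤ 1 - ∑ k, v k)]
        · rw [Set.indicator_of_notMem hv]
          have hz : ∀ x : ℝ, B.indicator (fun p => g (e.symm p)) (x, v) = 0 := by
            intro x
            rw [Set.indicator_of_notMem]
            intro hxmem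
            rcases (hBmem (x, v)).1 hxmem with ⟨h0, h1, h2⟩
            exact hv ⟨h0, by linarith⟩
          simp only [hz, integral_zero]
    _ = ∫ v in stdSimplexSet n, ∫ x in (0:ℝ)..(1 - ∑ k, v k), g (Fin.insertNth i x v) :=
        integral_indicator (measurableSet_simplex n)

noncomputable def I (n : ℕ) (g : ℝ → ℝ) (a : Fin (n + 1) → ℝ) : ℝ :=
  ∫ u in stdSimplexSet n, g (bary a u)

lemma sum_insertNth {n : ℕ} (i : Fin (n + 1)) (x : ℝ) (v : Fin n → ℝ) :
    ∑ j, Fin.insertNth i x v j = x + ∑ k, v k := by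
  rw [Fin.sum_univ_succAbove _ i]
  simp

lemma pow_int (c : ℝ) (k : ℕ) :
    ∫ x in (0:ℝ)..c, (c - x) ^ k = c ^ (k + 1) / (k + 1) := by
  rw [intervalIntegral.integral_comp_sub_left (fun x => x ^ k) c]
  simp [integral_pow]

lemma stdSimplexSet_zero : stdSimplexSet 0 = Set.univ := by
  ext u
  simp [stdSimplexSet]

lemma J_val (n : ℕ) : ∀ k : ℕ,
    (∫ u in stdSimplexSet n, (1 - ∑ j, u j) ^ k)
      = (k.factorial : ℝ) / (n + k).factorial := by
  induction n with
  | zero =>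
    intro k
    rw [stdSimplexSet_zero, Measure.restrict_univ]
    have : ∀ u : Fin 0 → ℝ, (1 - ∑ j, u j) ^ k = 1 := by
      intro u; simp
    simp only [this]
    rw [integral_const]
    have hvol : (volume (Set.univ : Set (Fin 0 → ℝ))) = 1 := by
      rw [MeasureTheory.volume_pi, Measure.pi_univ]
      simp
    rw [measureReal_def, hvol]
    have : (k.factorial : ℝ) ≠ 0 := by exact_mod_cast k.factorial_ne_zero
    simp [div_self this]
  | succ n ih =>
    intro k
    rw [slice (Fin.last n) _ (by fun_prop)]
    have inner : ∀ v : Fin n → ℝ,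
        (∫ x in (0:ℝ)..(1 - ∑ j, v j), (1 - ∑ j, Fin.insertNth (Fin.last n) x v j) ^ k)
          = (1 - ∑ j, v j) ^ (k + 1) / (k + 1) := by
      intro v
      have : ∀ x : ℝ, (1 - ∑ j, Fin.insertNth (Fin.last n) x v j) ^ k
          = ((1 - ∑ j, v j) - x) ^ k := by
        intro x; rw [sum_insertNth]; ring_nf
      simp only [this]
      exact pow_int _ k
    simp only [inner]
    rw [integral_div, ih (k + 1)]
    rw [Nat.factorial_succ]
    have h1 : (n + 1 : ℕ) + k = n + (k + 1) := by omega
    rw [h1]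
    have hk : ((k:ℝ) + 1) ≠ 0 := by positivity
    push_cast
    field_simp

lemma volume_simplex (n : ℕ) :
    (volume (stdSimplexSet n)).toReal = 1 / n.factorial := by
  have := J_val n 0
  simp only [pow_zero] at this
  rw [setIntegral_const] at this
  rw [← measureReal_def]
  simpa using this

lemma ftc_aff (m : ℕ) (f : ℝ → ℝ) (hf : ContDiff ℝ (m + 1) f) (b d c : ℝ) (hd : d ≠ 0) :
    ∫ x in (0:ℝ)..c, iteratedDeriv (m + 1) f (b + x * d)
      = (iteratedDeriv m f (b + c * d) - iteratedDeriv m f b) / d := by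
  have hcont : Continuous (iteratedDeriv (m + 1) f) :=
    hf.continuous_iteratedDeriv (m + 1) (by exact_mod_cast le_rfl)
  have hdiff : Differentiable ℝ (iteratedDeriv m f) :=
    hf.differentiable_iteratedDeriv m (by exact_mod_cast Nat.lt_succ_self m)
  have hder : ∀ y : ℝ, HasDerivAt (iteratedDeriv m f) (iteratedDeriv (m + 1) f y) y := by
    intro y
    have h := (hdiff y).hasDerivAt
    rwa [show deriv (iteratedDeriv m f) y = iteratedDeriv (m + 1) f y by
      rw [iteratedDeriv_succ]] at h
  have hF : ∀ x : ℝ, HasDerivAt (fun y : ℝ => iteratedDeriv m f (b + y * d) / d)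
      (iteratedDeriv (m + 1) f (b + x * d)) x := by
    intro x
    have haff : HasDerivAt (fun y : ℝ => b + y * d) d x := by
      simpa using ((hasDerivAt_id x).mul_const d).const_add b
    have := ((hder (b + x * d)).comp x haff).div_const d
    simpa [mul_div_assoc, mul_div_cancel_right₀ _ hd] using this
  have hint : IntervalIntegrable (fun x => iteratedDeriv (m + 1) f (b + x * d))
      volume 0 c := (hcont.comp (by fun_prop)).intervalIntegrable 0 c
  have := intervalIntegral.integral_eq_sub_of_hasDerivAt (f := fun y => iteratedDeriv m f (b + y * d) / d)
      (fun x _ => hF x) hint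
  rw [this]
  simp [sub_div]


lemma I_tail_perm {n : ℕ} {g : ℝ → ℝ} (τ : Equiv.Perm (Fin n))
    (a b : Fin (n + 1) → ℝ) (h0 : b 0 = a 0) (ht : ∀ k, b k.succ = a (τ k).succ) :
    I n g b = I n g a := by
  classical
  set E := (MeasurableEquiv.piCongrLeft (fun _ : Fin n => ℝ) τ.symm).symm with hE
  have hEapp : ∀ u : Fin n → ℝ, E u = fun j => u (τ.symm j) := by intro u; rfl
  have hmp : MeasurePreserving E volume volume :=
    (volume_measurePreserving_piCongrLeft (fun _ : Fin n => ℝ) τ.symm).symm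
  have key := hmp.setIntegral_preimage_emb E.measurableEmbedding
      (fun u => g (bary a u)) (stdSimplexSet n)
  have hpre : E ⁻¹' stdSimplexSet n = stdSimplexSet n := by
    ext u
    simp only [Set.mem_preimage, stdSimplexSet, Set.mem_setOf_eq, hEapp]
    constructor
    · rintro ⟨h1, h2⟩
      refine ⟨fun j => by simpa using h1 (τ j), ?_⟩
      rwa [Equiv.sum_comp τ.symm u] at h2
    · rintro ⟨h1, h2⟩
      refine ⟨fun j => h1 _, ?_⟩
      rwa [Equiv.sum_comp τ.symm u]
  have hbary : ∀ u, bary a (E u) = bary b u := by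
    intro u
    simp only [hEapp, bary]
    rw [Equiv.sum_comp τ.symm u]
    congr 1
    · rw [h0]
    · calc ∑ k, u (τ.symm k) * a k.succ
          = ∑ k, u (τ.symm (τ k)) * a (τ k).succ := (Equiv.sum_comp τ _).symm
        _ = ∑ k, u k * b k.succ := by
            congr 1; funext k; rw [Equiv.symm_apply_apply, ht k]
  rw [I, I, ← key, hpre]
  congr 1; funext u; rw [hbary]

lemma I_swap_zero {n : ℕ} {g : ℝ → ℝ} (hg : Continuous g) (j : Fin (n + 1))
    (a b : Fin (n + 2) → ℝ) (h0 : b 0 = a j.succ) (hj : b j.succ = a 0)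
    (hother : ∀ k, k ≠ j → b k.succ = a k.succ) :
    I (n + 1) g b = I (n + 1) g a := by
  have hcb : ∀ c : Fin (n + 2) → ℝ, Continuous fun u => g (bary c u) :=
    fun c => hg.comp (continuous_bary c)
  rw [I, I, slice j _ (hcb b), slice j _ (hcb a)]
  refine setIntegral_congr_fun (measurableSet_simplex n) (fun v _ => ?_)
  have hob : ∀ k : Fin n, b (j.succAbove k).succ = a (j.succAbove k).succ :=
    fun k => hother _ (Fin.succAbove_ne j k)
  have key : ∀ x : ℝ, bary b (Fin.insertNth j x v)
      = bary a (Fin.insertNth j ((1 - ∑ k, v k) - x) v) := by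
    intro x
    simp only [bary, Fin.sum_univ_succAbove _ j, Fin.insertNth_apply_same,
      Fin.insertNth_apply_succAbove, h0, hj, hob]
    ring
  simp only [key]
  rw [intervalIntegral.integral_comp_sub_left
      (fun x => g (bary a (Fin.insertNth j x v))) (1 - ∑ k, v k)]
  simp

lemma I_swap {n : ℕ} {g : ℝ → ℝ} (hg : Continuous g) (a : Fin (n + 1) → ℝ)
    (x y : Fin (n + 1)) : I n g (a ∘ Equiv.swap x y) = I n g a := by
  classical
  rcases eq_or_ne x y with rfl | hxy
  · have : a ∘ Equiv.swap x x = a := by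
      funext u; simp [Equiv.swap_self]
    rw [this]
  cases n with
  | zero => exact absurd (Fin.fin_one_eq_zero x ▸ Fin.fin_one_eq_zero y ▸ rfl) hxy
  | succ n =>
    have hsucc : ∀ (i j : Fin (n + 1)) (k : Fin (n + 1)),
        Equiv.swap i.succ j.succ k.succ = (Equiv.swap i j k).succ := by
      intro i j k
      rcases eq_or_ne k i with rfl | hki
      · simp
      rcases eq_or_ne k j with rfl | hkj
      · simp
      · rw [Equiv.swap_apply_of_ne_of_ne (fun h => hki (Fin.succ_injective _ h))
          (fun h => hkj (Fin.succ_injective _ h)), Equiv.swap_apply_of_ne_of_ne hki hkj]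
    induction x using Fin.cases with
    | zero =>
      induction y using Fin.cases with
      | zero => exact absurd rfl hxy
      | succ j =>
        refine I_swap_zero hg j a (a ∘ Equiv.swap 0 j.succ) ?_ ?_ ?_
        · simp [Function.comp]
        · simp [Function.comp]
        · intro k hk
          have h1 : (k.succ : Fin (n + 2)) ≠ 0 := Fin.succ_ne_zero k
          have h2 : (k.succ : Fin (n + 2)) ≠ j.succ := fun h => hk (Fin.succ_injective _ h)
          simp [Function.comp, Equiv.swap_apply_of_ne_of_ne h1 h2]
    | succ i =>
      induction y using Fin.cases with
      | zero =>
        rw [Equiv.swap_comm]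
        refine I_swap_zero hg i a (a ∘ Equiv.swap 0 i.succ) ?_ ?_ ?_
        · simp [Function.comp]
        · simp [Function.comp]
        · intro k hk
          have h1 : (k.succ : Fin (n + 2)) ≠ 0 := Fin.succ_ne_zero k
          have h2 : (k.succ : Fin (n + 2)) ≠ i.succ := fun h => hk (Fin.succ_injective _ h)
          simp [Function.comp, Equiv.swap_apply_of_ne_of_ne h1 h2]
      | succ j =>
        refine I_tail_perm (Equiv.swap i j) a (a ∘ Equiv.swap i.succ j.succ) ?_ ?_
        · have h1 : (0 : Fin (n + 2)) ≠ i.succ := (Fin.succ_ne_zero i).symm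
          have h2 : (0 : Fin (n + 2)) ≠ j.succ := (Fin.succ_ne_zero j).symm
          simp [Function.comp, Equiv.swap_apply_of_ne_of_ne h1 h2]
        · intro k
          simp [Function.comp, hsucc i j k]

lemma I_perm {n : ℕ} {g : ℝ → ℝ} (hg : Continuous g) (a : Fin (n + 1) → ℝ)
    (σ : Equiv.Perm (Fin (n + 1))) : I n g (a ∘ σ) = I n g a := by
  have main : ∀ σ : Equiv.Perm (Fin (n + 1)), ∀ a : Fin (n + 1) → ℝ,
      I n g (a ∘ σ) = I n g a := by
    intro σ
    refine Equiv.Perm.swap_induction_on σ (fun a => rfl) ?_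
    intro τ x y hxy ih a
    have hcmp : a ∘ (Equiv.swap x y * τ) = (a ∘ Equiv.swap x y) ∘ τ := rfl
    rw [hcmp, ih (a ∘ Equiv.swap x y), I_swap hg a x y]
  exact main σ a

lemma I_const {n : ℕ} (g : ℝ → ℝ) (c : ℝ) :
    I n g (fun _ => c) = g c / n.factorial := by
  have hb : ∀ u : Fin n → ℝ, bary (fun _ => c) u = c := by
    intro u
    simp only [bary]
    rw [← Finset.sum_mul]
    ring
  rw [I]
  simp only [hb]
  rw [setIntegral_const, measureReal_def, volume_simplex n, smul_eq_mul]
  ring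

lemma I_rec {n : ℕ} (f : ℝ → ℝ) (hf : ContDiff ℝ (n + 1) f) (a : Fin (n + 2) → ℝ)
    (hne : a (Fin.last (n + 1)) ≠ a 0) :
    I (n + 1) (iteratedDeriv (n + 1) f) a
      = (I n (iteratedDeriv n f) (fun k => a k.succ)
          - I n (iteratedDeriv n f) (fun k => a k.castSucc))
        / (a (Fin.last (n + 1)) - a 0) := by
  classical
  set d : ℝ := a (Fin.last (n + 1)) - a 0 with hd
  have hdne : d ≠ 0 := sub_ne_zero.mpr hne
  have hcont : Continuous (iteratedDeriv (n + 1) f) :=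
    hf.continuous_iteratedDeriv (n + 1) (by exact_mod_cast le_rfl)
  have hcontn : Continuous (iteratedDeriv n f) :=
    hf.continuous_iteratedDeriv n (by exact_mod_cast Nat.le_succ n)
  -- the "rotated" node tuple for the first term
  set cnode : Fin (n + 1) → ℝ :=
    fun k => Fin.cases (a (Fin.last (n + 1))) (fun k : Fin n => a k.succ.castSucc) k with hcnode
  have hbary : ∀ (v : Fin n → ℝ) (x : ℝ),
      bary a (Fin.insertNth (Fin.last n) x v)
        = bary (fun k => a k.castSucc) v + x * d := by
    intro v x
    simp only [bary, sum_insertNth, Fin.sum_univ_succAbove _ (Fin.last n),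
      Fin.insertNth_apply_same, Fin.insertNth_apply_succAbove]
    simp only [Fin.succAbove_last, Fin.succ_last, hd]
    have hcs : ∀ k : Fin n, a k.castSucc.succ = a k.succ.castSucc := by
      intro k; rw [Fin.succ_castSucc]
    simp only [hcs, Fin.castSucc_zero]
    ring
  have hrot : (fun k : Fin (n + 1) => a k.succ) = cnode ∘ (finRotate (n + 1)) := by
    funext k
    induction k using Fin.lastCases with
    | last =>
      simp only [Function.comp_apply, finRotate_last, hcnode, Fin.cases_zero, Fin.succ_last]
    | cast j =>
      simp only [Function.comp_apply, finRotate_succ_apply, Fin.coeSucc_eq_succ, hcnode,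
        Fin.cases_succ, Fin.succ_castSucc]
  have hG : Continuous (iteratedDeriv n f) := hcontn
  have hc : ∀ v : Fin n → ℝ,
      bary (fun k => a k.castSucc) v + (1 - ∑ k, v k) * d = bary cnode v := by
    intro v
    simp only [bary, hcnode, Fin.cases_zero, Fin.cases_succ, Fin.castSucc_zero, hd]
    ring
  rw [show I (n + 1) (iteratedDeriv (n + 1) f) a
      = ∫ u in stdSimplexSet (n + 1), iteratedDeriv (n + 1) f (bary a u) from rfl,
    slice (Fin.last n) (fun u => iteratedDeriv (n + 1) f (bary a u))
      (Continuous.comp hcont (continuous_bary a))]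
  have inner : ∀ v : Fin n → ℝ,
      (∫ x in (0:ℝ)..(1 - ∑ k, v k),
          iteratedDeriv (n + 1) f (bary a (Fin.insertNth (Fin.last n) x v)))
        = (iteratedDeriv n f (bary cnode v)
            - iteratedDeriv n f (bary (fun k => a k.castSucc) v)) / d := by
    intro v
    simp only [hbary v]
    rw [ftc_aff n f hf _ d _ hdne, hc v]
  simp only [inner]
  rw [integral_div]
  have int1 : IntegrableOn (fun v => iteratedDeriv n f (bary cnode v))
      (stdSimplexSet n) volume := integrableOn_simplex (hG.comp (continuous_bary cnode))
  have int2 : IntegrableOn (fun v => iteratedDeriv n f (bary (fun k => a k.castSucc) v))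
      (stdSimplexSet n) volume :=
    integrableOn_simplex (hG.comp (continuous_bary (fun k => a k.castSucc)))
  rw [integral_sub int1 int2]
  have : I n (iteratedDeriv n f) (fun k => a k.succ) = I n (iteratedDeriv n f) cnode := by
    rw [show (fun k : Fin (n+1) => a k.succ) = cnode ∘ (finRotate (n + 1)) from hrot]
    exact I_perm hG cnode (finRotate (n + 1))
  rw [this]
  rfl


lemma dropLast_ofFn {α : Type*} {n : ℕ} (g : Fin (n + 1) → α) :
    (List.ofFn g).dropLast = List.ofFn (fun i : Fin n => g i.castSucc) := by
  rw [List.ofFn_succ' g]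
  simp [List.dropLast_concat]

lemma cDivDiff_ofFn_succ (f : ℝ → ℝ) {n : ℕ} (a : Fin (n + 2) → ℝ) :
    cDivDiff f (List.ofFn a)
      = if a (Fin.last (n + 1)) = a 0 then
          iteratedDeriv (n + 1) f (a 0) / (n + 1).factorial
        else
          ((cDivDiff f (List.ofFn (fun i : Fin (n + 1) => a i.succ))
            - cDivDiff f (List.ofFn (fun i : Fin (n + 1) => a i.castSucc)))
            / (a (Fin.last (n + 1)) - a 0)) := by
  have htl : List.ofFn (fun i : Fin (n + 1) => a i.succ)
      = a 1 :: List.ofFn (fun i : Fin n => a i.succ.succ) := by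
    rw [List.ofFn_succ]
    simp [Fin.succ_zero_eq_one]
  have hlist : List.ofFn a = a 0 :: a 1 :: List.ofFn (fun i : Fin n => a i.succ.succ) := by
    rw [List.ofFn_succ, htl]
  have hlast : (a 1 :: List.ofFn (fun i : Fin n => a i.succ.succ)).getLast (by simp)
      = a (Fin.last (n + 1)) := by
    simp only [← htl, List.getLast_ofFn_succ]
    simp [Fin.succ_last]
  have hdrop : a 0 :: (a 1 :: List.ofFn (fun i : Fin n => a i.succ.succ)).dropLast
      = List.ofFn (fun i : Fin (n + 1) => a i.castSucc) := by
    rw [← htl, dropLast_ofFn]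

    rw [List.ofFn_succ (f := fun i : Fin (n + 1) => a i.castSucc)]
    simp only [Fin.castSucc_zero]
    congr 1
  rw [hlist, cDivDiff, hlast, hdrop, ← htl]
  simp only [List.length_ofFn]

lemma key (n : ℕ) : ∀ (f : ℝ → ℝ), ContDiff ℝ n f → ∀ a : Fin (n + 1) → ℝ, Monotone a →
    cDivDiff f (List.ofFn a) = I n (iteratedDeriv n f) a := by
  induction n with
  | zero =>
    intro f hf a ha
    have ha0 : a = fun _ => a 0 := by
      funext i
      rw [Fin.fin_one_eq_zero i]
    rw [ha0, I_const]
    simp [cDivDiff, iteratedDeriv_zero]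
  | succ n ih =>
    intro f hf a ha
    rw [cDivDiff_ofFn_succ f a]
    by_cases hlast : a (Fin.last (n + 1)) = a 0
    · rw [if_pos hlast]
      have hconst : a = fun _ => a 0 := by
        funext i
        exact le_antisymm (hlast ▸ ha (Fin.le_last i)) (ha (Fin.zero_le i))
      conv_rhs => rw [hconst]
      rw [I_const]
    · rw [if_neg hlast]
      have hfn : ContDiff ℝ n f := hf.of_le (by exact_mod_cast Nat.le_succ n)
      have h1 : Monotone (fun i : Fin (n + 1) => a i.succ) :=
        fun i j hij => ha (Fin.succ_le_succ_iff.mpr hij)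
      have h2 : Monotone (fun i : Fin (n + 1) => a i.castSucc) :=
        fun i j hij => ha (Fin.castSucc_le_castSucc_iff.mpr hij)
      rw [ih f hfn _ h1, ih f hfn _ h2, I_rec f hf a hlast]


end HGaux

/-- **Hermite–Genocchi formula** -/
theorem hermite_genocchi (n : ℕ) (hn : 1 ≤ n) (f : ℝ → ℝ) (hf : ContDiff ℝ n f)
    (a : Fin (n + 1) → ℝ) :
    cDivDiff f (List.ofFn (a ∘ Tuple.sort a)) =
      ∫ u in stdSimplexSet n,
        iteratedDeriv n f ((1 - ∑ k, u k) * a 0 + ∑ k, u k * a k.succ) := by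
  have hmono : Monotone (a ∘ Tuple.sort a) := Tuple.monotone_sort a
  have hcont : Continuous (iteratedDeriv n f) :=
    hf.continuous_iteratedDeriv n (by exact_mod_cast le_rfl)
  rw [HGaux.key n f hf _ hmono, HGaux.I_perm hcont a (Tuple.sort a)]
  rfl
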